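/- (Kushnirenko's inequality) Let (X,d) be a compact metric space of finite ball dimension D(X) and f : X → X a Lipschitz map with Lipschitz constant L(f). Then h_top(f) ≤ D(X)·max(0, log L(f)). -/

import Mathlib

open Filter Set

noncomputable section

/-- The Bowen metric `d_n^T(x,y) = max_{0 ≤ i < n} d(T^i x, T^i y)`. -/
def bowen {X : Type*} [MetricSpace X] (T : X → X) (n : ℕ) (x y : X) : ℝ :=
  (((Finset.range n).sup fun i => nndist (T^[i] x) (T^[i] y) : NNReal) : ℝ)

/-- Minimal cardinality `b(ε)` of a cover of `X` by `ε`-balls. -/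
def ballCov (X : Type*) [MetricSpace X] (ε : ℝ) : ℕ :=
  sInf {k | ∃ s : Finset X, s.card = k ∧ (Set.univ : Set X) ⊆ ⋃ x ∈ s, Metric.ball x ε}

/-- The ball dimension `D(X) = limsup_{ε→0} log b(ε) / |log ε|`. -/
def ballDim (X : Type*) [MetricSpace X] : ℝ :=
  limsup (fun ε : ℝ => Real.log (ballCov X ε) / |Real.log ε|) (nhdsWithin 0 (Set.Ioi 0))

/-- Minimal number of `ε`-balls in the Bowen metric `d_n^T` needed to cover `X`. -/
def bowenCov {X : Type*} [MetricSpace X] (T : X → X) (n : ℕ) (ε : ℝ) : ℕ :=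
  sInf {k | ∃ s : Finset X, s.card = k ∧
    (Set.univ : Set X) ⊆ ⋃ x ∈ s, {y | bowen T n x y < ε}}

/-- Topological entropy `h_top(T) = lim_{ε→0} limsup_n (1/n) log S_{d_n^T}(ε)`. -/
def htop {X : Type*} [MetricSpace X] (T : X → X) : ℝ :=
  ⨆ ε : {e : ℝ // 0 < e},
    limsup (fun n : ℕ => Real.log (bowenCov T n (ε : ℝ)) / n) atTop

private lemma log_nat_nonneg (n : ℕ) : 0 ≤ Real.log n := by
  rcases Nat.eq_zero_or_pos n with h | h
  · simp [h]
  · exact Real.log_nonneg (by exact_mod_cast h)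

private lemma log_nat_mono {a b : ℕ} (h : a ≤ b) : Real.log a ≤ Real.log b := by
  rcases Nat.eq_zero_or_pos a with h0 | h0
  · simpa [h0] using log_nat_nonneg b
  · exact Real.log_le_log (by exact_mod_cast h0) (by exact_mod_cast h)

private lemma ballCov_mem {X : Type*} [MetricSpace X] [CompactSpace X] {ε : ℝ} (hε : 0 < ε) :
    ∃ s : Finset X, s.card = ballCov X ε ∧
      (Set.univ : Set X) ⊆ ⋃ x ∈ s, Metric.ball x ε := by
  have hne : {k | ∃ s : Finset X, s.card = k ∧
      (Set.univ : Set X) ⊆ ⋃ x ∈ s, Metric.ball x ε}.Nonempty := by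
    obtain ⟨t, -, hft, hcov⟩ := finite_cover_balls_of_compact (isCompact_univ : IsCompact (Set.univ : Set X)) hε
    refine ⟨hft.toFinset.card, hft.toFinset, rfl, ?_⟩
    intro y hy
    have := hcov hy
    simp only [mem_iUnion] at this ⊢
    obtain ⟨x, hx, hxy⟩ := this
    exact ⟨x, hft.mem_toFinset.2 hx, hxy⟩
  obtain ⟨s, hcard, hcov⟩ := Nat.sInf_mem hne
  exact ⟨s, hcard, hcov⟩

private lemma bowen_lt {X : Type*} [MetricSpace X] {f : X → X} {L : NNReal}
    (hf : LipschitzWith L f) (n : ℕ) {x y : X} {ε : ℝ} (hε : 0 < ε)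
    (h : dist x y < ε / (max 1 (L : ℝ)) ^ n) : bowen f n x y < ε := by
  have hM1 : (1 : ℝ) ≤ max 1 (L : ℝ) := le_max_left _ _
  have hMn : (0 : ℝ) < (max 1 (L : ℝ)) ^ n := pow_pos (lt_of_lt_of_le one_pos hM1) n
  have hbound : bowen f n x y ≤ (max 1 (L : ℝ)) ^ n * dist x y := by
    have hsup : ((Finset.range n).sup fun i => nndist (f^[i] x) (f^[i] y))
        ≤ (max 1 L) ^ n * nndist x y := by
      apply Finset.sup_le
      intro i hi
      have h1 : nndist (f^[i] x) (f^[i] y) ≤ L ^ i * nndist x y := by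
        have := (hf.iterate i).dist_le_mul x y
        rw [← NNReal.coe_le_coe]
        push_cast
        simpa using this
      refine h1.trans (mul_le_mul_of_nonneg_right ?_ (by positivity))
      calc L ^ i ≤ (max 1 L) ^ i := pow_le_pow_left₀ (by positivity) (le_max_right _ _) i
        _ ≤ (max 1 L) ^ n := pow_le_pow_right₀ (le_max_left _ _) (Finset.mem_range.1 hi).le
    have := NNReal.coe_le_coe.2 hsup
    rw [bowen]
    push_cast at this ⊢
    simpa using this
  calc bowen f n x y ≤ (max 1 (L : ℝ)) ^ n * dist x y := hbound
    _ < (max 1 (L : ℝ)) ^ n * (ε / (max 1 (L : ℝ)) ^ n) := by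
        exact mul_lt_mul_of_pos_left h hMn
    _ = ε := by field_simp

private lemma bowenCov_le {X : Type*} [MetricSpace X] [CompactSpace X] {f : X → X} {L : NNReal}
    (hf : LipschitzWith L f) (n : ℕ) {ε : ℝ} (hε : 0 < ε) :
    bowenCov f n ε ≤ ballCov X (ε / (max 1 (L : ℝ)) ^ n) := by
  have hM1 : (1 : ℝ) ≤ max 1 (L : ℝ) := le_max_left _ _
  have hδ : 0 < ε / (max 1 (L : ℝ)) ^ n :=
    div_pos hε (pow_pos (lt_of_lt_of_le one_pos hM1) n)
  obtain ⟨s, hcard, hcov⟩ := ballCov_mem (X := X) hδ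
  apply Nat.sInf_le
  refine ⟨s, hcard, fun y hy => ?_⟩
  have := hcov hy
  simp only [mem_iUnion] at this ⊢
  obtain ⟨x, hx, hxy⟩ := this
  refine ⟨x, hx, ?_⟩
  have : dist x y < ε / (max 1 (L : ℝ)) ^ n := by
    rw [dist_comm]; exact Metric.mem_ball.1 hxy
  exact bowen_lt hf n hε this

/-- Kushnirenko's inequality: for a Lipschitz map `f` of a compact metric space of
finite ball dimension, `h_top(f) ≤ D(X) · max(0, log L(f))`. -/
theorem kushnirenko_inequality {X : Type*} [MetricSpace X] [CompactSpace X]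
    (f : X → X) (L : NNReal) (hf : LipschitzWith L f)
    (hfin : IsBoundedUnder (· ≤ ·) (nhdsWithin 0 (Set.Ioi 0))
      (fun ε : ℝ => Real.log (ballCov X ε) / |Real.log ε|)) :
    htop f ≤ ballDim X * max 0 (Real.log (L : ℝ)) := by
  set M : ℝ := max 1 (L : ℝ) with hM
  have hM1 : (1 : ℝ) ≤ M := le_max_left _ _
  have hM0 : (0 : ℝ) < M := lt_of_lt_of_le one_pos hM1
  have hlogM : Real.log M = max 0 (Real.log (L : ℝ)) := by
    rcases le_total (L : ℝ) 1 with h | h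
    · rw [max_eq_left (Real.log_nonpos L.coe_nonneg h), hM, max_eq_left h, Real.log_one]
    · rw [max_eq_right (Real.log_nonneg h), hM, max_eq_right h]
  rw [← hlogM]
  set D := ballDim X with hD
  have hne : Nonempty {e : ℝ // 0 < e} := ⟨⟨1, one_pos⟩⟩
  rw [htop]
  refine ciSup_le fun e => ?_
  obtain ⟨ε, hε⟩ := e
  set u : ℕ → ℝ := fun n => Real.log (bowenCov f n ε) / n with hu
  have hu0 : ∀ n, 0 ≤ u n := fun n => div_nonneg (log_nat_nonneg _) (Nat.cast_nonneg n)
  have hcob : IsCoboundedUnder (· ≤ ·) atTop u :=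
    isCoboundedUnder_le_of_le atTop hu0
  have key : ∀ a : ℝ, 0 < a → limsup u atTop ≤ D * Real.log M + a := by
    intro a ha
    rcases eq_or_lt_of_le hM1 with hM1' | hM1'
    · -- M = 1
      have hlog0 : Real.log M = 0 := by rw [← hM1', Real.log_one]
      have hCn : Tendsto (fun n : ℕ => Real.log (ballCov X ε) / n) atTop (nhds 0) :=
        tendsto_const_div_atTop_nhds_zero_nat _
      have hev : ∀ᶠ n : ℕ in atTop, u n ≤ D * Real.log M + a := by
        filter_upwards [hCn.eventually_le_const ha, eventually_ge_atTop 1] with n h1 h2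
        have hnpos : (0 : ℝ) < n := by exact_mod_cast h2
        have hb : bowenCov f n ε ≤ ballCov X ε := by
          have := bowenCov_le hf n hε (L := L) (X := X)
          rwa [← hM, ← hM1', one_pow, div_one] at this
        have : u n ≤ Real.log (ballCov X ε) / n :=
          div_le_div_of_nonneg_right (log_nat_mono hb) hnpos.le
        rw [hlog0, mul_zero, zero_add]
        exact this.trans h1
      exact limsup_le_of_le hcob hev
    · -- 1 < M
      have hlogMpos : 0 < Real.log M := Real.log_pos hM1'
      set η : ℝ := a / (2 * Real.log M) with hη
      have hηpos : 0 < η := div_pos ha (by positivity)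
      set g : ℝ → ℝ := fun ε' => Real.log (ballCov X ε') / |Real.log ε'| with hg
      have hlim : limsup g (nhdsWithin 0 (Set.Ioi 0)) < D + η :=
        lt_add_of_pos_right D hηpos
      have hevg : ∀ᶠ ε' in nhdsWithin 0 (Set.Ioi 0), g ε' < D + η :=
        eventually_lt_of_limsup_lt hlim hfin
      set δ : ℕ → ℝ := fun n => ε / M ^ n with hδ
      have hδpos : ∀ n, 0 < δ n := fun n => div_pos hε (pow_pos hM0 n)
      have hδtend : Tendsto δ atTop (nhds 0) := by
        have h1 : Tendsto (fun n : ℕ => ε * (M⁻¹) ^ n) atTop (nhds (ε * 0)) :=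
          (tendsto_pow_atTop_nhds_zero_of_lt_one (inv_nonneg.2 hM0.le)
            (inv_lt_one_of_one_lt₀ hM1')).const_mul ε
        rw [mul_zero] at h1
        convert h1 using 2 with n
        show ε / M ^ n = ε * M⁻¹ ^ n
        rw [div_eq_mul_inv, inv_pow]
      have hδtend' : Tendsto δ atTop (nhdsWithin 0 (Set.Ioi 0)) :=
        tendsto_nhdsWithin_of_tendsto_nhds_of_eventually_within _ hδtend
          (Eventually.of_forall fun n => hδpos n)
      have h1 : ∀ᶠ n : ℕ in atTop, g (δ n) < D + η := hδtend'.eventually hevg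
      have h2 : ∀ᶠ n : ℕ in atTop, δ n < 1 := hδtend.eventually_lt_const one_pos
      have h3 : Tendsto (fun n : ℕ => (D + η) * |Real.log ε| / n) atTop (nhds 0) :=
        tendsto_const_div_atTop_nhds_zero_nat _
      have h4 : ∀ᶠ n : ℕ in atTop, (D + η) * |Real.log ε| / n ≤ a / 2 :=
        h3.eventually_le_const (half_pos ha)
      -- D + η is nonneg
      have hDη : 0 ≤ D + η := by
        obtain ⟨n₀, hn₀⟩ := h1.exists
        have : 0 ≤ g (δ n₀) := div_nonneg (log_nat_nonneg _) (abs_nonneg _)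
        linarith
      have hηlog : η * Real.log M = a / 2 := by
        rw [hη]; field_simp
      have hev : ∀ᶠ n : ℕ in atTop, u n ≤ D * Real.log M + a := by
        filter_upwards [h1, h2, h4, eventually_ge_atTop 1] with n hgn hδ1 hsmall hn1
        have hnpos : (0 : ℝ) < n := by exact_mod_cast hn1
        have hlogδneg : Real.log (δ n) < 0 := Real.log_neg (hδpos n) hδ1
        have habs : 0 < |Real.log (δ n)| := abs_pos.2 hlogδneg.ne
        have hb : Real.log (bowenCov f n ε) ≤ Real.log (ballCov X (δ n)) :=
          log_nat_mono (bowenCov_le hf n hε)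
        have hgb : Real.log (ballCov X (δ n)) ≤ (D + η) * |Real.log (δ n)| :=
          ((div_lt_iff₀ habs).1 hgn).le
        have hlogδ : |Real.log (δ n)| ≤ |Real.log ε| + n * Real.log M := by
          have heq : Real.log (δ n) = Real.log ε - n * Real.log M := by
            rw [hδ, Real.log_div hε.ne' (pow_pos hM0 n).ne', Real.log_pow]
          rw [heq]
          calc |Real.log ε - n * Real.log M| ≤ |Real.log ε| + |(n : ℝ) * Real.log M| :=
                abs_sub _ _
            _ = |Real.log ε| + n * Real.log M := by
                rw [abs_of_nonneg (mul_nonneg (Nat.cast_nonneg n) hlogMpos.le)]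
        have key1 : Real.log (bowenCov f n ε) ≤ (D + η) * (|Real.log ε| + n * Real.log M) :=
          hb.trans (hgb.trans (mul_le_mul_of_nonneg_left hlogδ hDη))
        have hun : u n ≤ (D + η) * (|Real.log ε| + n * Real.log M) / n :=
          div_le_div_of_nonneg_right key1 hnpos.le
        have hexp : (D + η) * (|Real.log ε| + n * Real.log M) / n
            = (D + η) * |Real.log ε| / n + (D + η) * Real.log M := by
          field_simp
        rw [hexp] at hun
        have : (D + η) * Real.log M = D * Real.log M + a / 2 := by
          rw [add_mul, hηlog]
        linarith
      exact limsup_le_of_le hcob hev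
  refine le_of_forall_gt_imp_ge_of_dense fun c hc => ?_
  have := key (c - D * Real.log M) (by linarith)
  linarith

end
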